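/- For every integer m >= 4 and every integer s with 1 <= s <= 2^{m-2} - 1, one has g_m(s) >= s + 1. -/

import Mathlib

/-!
STATEMENT 1: For m ≥ 4 and 1 ≤ s ≤ 2^{m-2} - 1, g_m(s) ≥ s + 1.
-/

/-- `gsBound n r t j` is the quantity `E_j`:
`E_1 = ⌈(n-t+1)/(r-t+1)⌉` and `E_{j+1} = ⌈((n-t+j+1)·E_j)/(r-t+j+1)⌉`
(with `gsBound n r t 0 = 1`), where `⌈a/b⌉ = (a + (b-1))/b` in ℕ. -/
def gsBound (n r t : ℕ) : ℕ → ℕ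
  | 0 => 1
  | j + 1 => ((n - t + j + 1) * gsBound n r t j + (r - t + j)) / (r - t + j + 1)

/-- `gm m s` is the nested ceiling expression
`g_m(s) = ⌈(n/r)·⌈((n-1)/(r-1))·⌈ ... ⌈(n-s+1)/(r-s+1)⌉ ... ⌉⌉⌉`
with `n = 2^m` and `r = 2^m - m - 1`. -/
def gm (m s : ℕ) : ℕ := gsBound (2 ^ m) (2 ^ m - m - 1) s s

lemma gsBound_lower (n r t : ℕ) (htr : t ≤ r) (hrn : r < n) :
    ∀ j, j + 1 ≤ gsBound n r t j := by
  intro j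
  induction j with
  | zero => simp [gsBound]
  | succ j ih =>
    have hb : 0 < r - t + j + 1 := by omega
    have hab : r - t + j + 1 < n - t + j + 1 := by omega
    rw [gsBound, Nat.le_div_iff_mul_le hb]
    set E := gsBound n r t j with hE
    have hE1 : 1 ≤ E := le_trans (by omega) ih
    calc (j + 1 + 1) * (r - t + j + 1)
        = (r - t + j + 1) * (j + 1) + (r - t + j + 1) := by ring
      _ ≤ (r - t + j + 1) * E + (r - t + j + 1) :=
          by gcongr
      _ ≤ (n - t + j + 1) * E + (r - t + j) := by nlinarith
  
theorem stmt1 (m s : ℕ) (hm : 4 ≤ m) (hs1 : 1 ≤ s) (hs2 : s ≤ 2 ^ (m - 2) - 1) :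
    s + 1 ≤ gm m s := by
  have hm2 : m ≤ 2 ^ (m - 2) := by
    have : ∀ k, 4 + k ≤ 2 ^ (4 + k - 2) := by
      intro k
      induction k with
      | zero => norm_num
      | succ k ih =>
        have : 4 + k - 2 + 1 = 4 + (k+1) - 2 := by omega
        calc 4 + (k + 1) ≤ 2 ^ (4 + k - 2) + 1 := by omega
          _ ≤ 2 ^ (4 + k - 2) + 2 ^ (4 + k - 2) := by
            have := Nat.one_le_two_pow (n := 4 + k - 2); omega
          _ = 2 ^ (4 + k - 2 + 1) := by ring
          _ = 2 ^ (4 + (k+1) - 2) := by rw [this]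
    have := this (m - 4)
    have h4 : 4 + (m - 4) = m := by omega
    rw [h4] at this
    exact this
  have hpow : 2 ^ (m - 2) * 4 = 2 ^ m := by
    have : m - 2 + 2 = m := by omega
    calc 2 ^ (m - 2) * 4 = 2 ^ (m - 2) * 2 ^ 2 := by norm_num
      _ = 2 ^ (m - 2 + 2) := by rw [pow_add]
      _ = 2 ^ m := by rw [this]
  have h1 : 0 < 2 ^ (m - 2) := Nat.pow_pos (by norm_num)
  have htr : s ≤ 2 ^ m - m - 1 := by omega
  have hrn : 2 ^ m - m - 1 < 2 ^ m := by omega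
  exact gsBound_lower _ _ _ htr hrn s
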